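/- Let W be a bipartite process tensor. Call a set of probabilistic local operations T̄^{A|X} (on wires incoming (I', O), outgoing (I, O')) nonsignaling if T̄^x := Σ_a T̄^{a|x} has one of the two forms: (case 1) T̄^x is the same tensor for every x; or (case 2) there exist convex weights π_λ ≥ 0 with Σ_λ π_λ = 1 and functions f_λ : I' × X → I, g_λ : I' → O' such that T̄^x(i, o' | i', o) = Σ_λ π_λ·δ_{i, f_λ(i', x)}·δ_{o', g_λ(i')}. Then the following are equivalent: (i) for every pair of nonsignaling sets of probabilistic local operations T̄^{A|X} on Alice's wires and T̄^{B|Y} on Bob's wires, the correlations P = (T̄^{A|X} ⊗ T̄^{B|Y}) * W are nonsignaling, i.e. Σ_b P(a, b | x, y) is independent of y and Σ_a P(a, b | x, y) is independent of x; (ii) _{O_A}W = _{I_AO_A}W and _{O_B}W = _{I_BO_B}W. -/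

import Mathlib

open Finset
open scoped Classical

noncomputable section

namespace Boxworld

/-- A bipartite 8-wire tensor `W(i'_A, o_A, i'_B, o_B | i_A, o'_A, i_B, o'_B)`,
with output indices `IA' OA IB' OB` and input indices `IA OA' IB OB'`. -/
abbrev WTen (IA' OA IB' OB IA OA' IB OB' : Type) : Type :=
  IA' → OA → IB' → OB → IA → OA' → IB → OB' → ℝ

/-- A local-operation tensor `T(i, o' | i', o)`, argument order `(i', o, i, o')`. -/
abbrev OpTen (I' O I O' : Type) : Type := I' → O → I → O' → ℝ

section WireDefs

variable {IA' OA IB' OB IA OA' IB OB' : Type}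
variable [Fintype IA'] [Fintype OA] [Fintype IB'] [Fintype OB]
variable [Fintype IA] [Fintype OA'] [Fintype IB] [Fintype OB']

/-- Reduce-and-replace over the index `IA'`. -/
def rrIA' (W : WTen IA' OA IB' OB IA OA' IB OB') : WTen IA' OA IB' OB IA OA' IB OB' :=
  fun _ oa ib' ob ia oa' ib ob' => (∑ j, W j oa ib' ob ia oa' ib ob') / (Fintype.card IA' : ℝ)

/-- Reduce-and-replace over the index `OA`. -/
def rrOA (W : WTen IA' OA IB' OB IA OA' IB OB') : WTen IA' OA IB' OB IA OA' IB OB' :=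
  fun ia' _ ib' ob ia oa' ib ob' => (∑ j, W ia' j ib' ob ia oa' ib ob') / (Fintype.card OA : ℝ)

/-- Reduce-and-replace over the index `IB'`. -/
def rrIB' (W : WTen IA' OA IB' OB IA OA' IB OB') : WTen IA' OA IB' OB IA OA' IB OB' :=
  fun ia' oa _ ob ia oa' ib ob' => (∑ j, W ia' oa j ob ia oa' ib ob') / (Fintype.card IB' : ℝ)

/-- Reduce-and-replace over the index `OB`. -/
def rrOB (W : WTen IA' OA IB' OB IA OA' IB OB') : WTen IA' OA IB' OB IA OA' IB OB' :=
  fun ia' oa ib' _ ia oa' ib ob' => (∑ j, W ia' oa ib' j ia oa' ib ob') / (Fintype.card OB : ℝ)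

/-- Reduce-and-replace over the index `IA`. -/
def rrIA (W : WTen IA' OA IB' OB IA OA' IB OB') : WTen IA' OA IB' OB IA OA' IB OB' :=
  fun ia' oa ib' ob _ oa' ib ob' => (∑ j, W ia' oa ib' ob j oa' ib ob') / (Fintype.card IA : ℝ)

/-- Reduce-and-replace over the index `OA'`. -/
def rrOA' (W : WTen IA' OA IB' OB IA OA' IB OB') : WTen IA' OA IB' OB IA OA' IB OB' :=
  fun ia' oa ib' ob ia _ ib ob' => (∑ j, W ia' oa ib' ob ia j ib ob') / (Fintype.card OA' : ℝ)

/-- Reduce-and-replace over the index `IB`. -/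
def rrIB (W : WTen IA' OA IB' OB IA OA' IB OB') : WTen IA' OA IB' OB IA OA' IB OB' :=
  fun ia' oa ib' ob ia oa' _ ob' => (∑ j, W ia' oa ib' ob ia oa' j ob') / (Fintype.card IB : ℝ)

/-- Reduce-and-replace over the index `OB'`. -/
def rrOB' (W : WTen IA' OA IB' OB IA OA' IB OB') : WTen IA' OA IB' OB IA OA' IB OB' :=
  fun ia' oa ib' ob ia oa' ib _ => (∑ j, W ia' oa ib' ob ia oa' ib j) / (Fintype.card OB' : ℝ)

/-- Total reduction `r(W)`: the sum of all entries of `W`. -/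
def tot (W : WTen IA' OA IB' OB IA OA' IB OB') : ℝ :=
  ∑ ia', ∑ oa, ∑ ib', ∑ ob, ∑ ia, ∑ oa', ∑ ib, ∑ ob', W ia' oa ib' ob ia oa' ib ob'

/-- Elementwise nonnegativity `W ≥ 0`. -/
def Nonneg8 (W : WTen IA' OA IB' OB IA OA' IB OB') : Prop :=
  ∀ ia' oa ib' ob ia oa' ib ob', 0 ≤ W ia' oa ib' ob ia oa' ib ob'

/-- Reduce-and-replace over all of Alice's indices `𝔸 = I'_A I_A O_A O'_A`. -/
def rrA (W : WTen IA' OA IB' OB IA OA' IB OB') : WTen IA' OA IB' OB IA OA' IB OB' :=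
  rrIA' (rrIA (rrOA (rrOA' W)))

/-- Reduce-and-replace over all of Bob's indices `𝔹 = I'_B I_B O_B O'_B`. -/
def rrB (W : WTen IA' OA IB' OB IA OA' IB OB') : WTen IA' OA IB' OB IA OA' IB OB' :=
  rrIB' (rrIB (rrOB (rrOB' W)))

/-- The combination `_{(1 − O'_A + O_A O'_A − I_A O_A O'_A)}W`. -/
def LA (W : WTen IA' OA IB' OB IA OA' IB OB') : WTen IA' OA IB' OB IA OA' IB OB' :=
  W - rrOA' W + rrOA (rrOA' W) - rrIA (rrOA (rrOA' W))

/-- The combination `_{(1 − O'_B + O_B O'_B − I_B O_B O'_B)}W`. -/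
def LB (W : WTen IA' OA IB' OB IA OA' IB OB') : WTen IA' OA IB' OB IA OA' IB OB' :=
  W - rrOB' W + rrOB (rrOB' W) - rrIB (rrOB (rrOB' W))

/-- A bipartite process tensor. -/
def IsProcessTensor (W : WTen IA' OA IB' OB IA OA' IB OB') : Prop :=
  Nonneg8 W ∧
  tot W = (Fintype.card IA : ℝ) * (Fintype.card OA' : ℝ) *
      (Fintype.card IB : ℝ) * (Fintype.card OB' : ℝ) ∧
  rrA (LB W) = 0 ∧
  rrB (LA W) = 0 ∧
  LA (LB W) = 0

/-- Reduce-and-replace over all primed indices `O'_A O'_B I'_A I'_B`. -/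
def rrPrimes (W : WTen IA' OA IB' OB IA OA' IB OB') : WTen IA' OA IB' OB IA OA' IB OB' :=
  rrOA' (rrOB' (rrIA' (rrIB' W)))

/-- The combination `_{(1 − O'_A + O'_A I'_A − O'_B O'_A I'_A)}W`. -/
def MA (W : WTen IA' OA IB' OB IA OA' IB OB') : WTen IA' OA IB' OB IA OA' IB OB' :=
  W - rrOA' W + rrIA' (rrOA' W) - rrOB' (rrIA' (rrOA' W))

/-- The combination `_{(1 − O'_B + O'_B I'_B − O'_A O'_B I'_B)}W`. -/
def MB (W : WTen IA' OA IB' OB IA OA' IB OB') : WTen IA' OA IB' OB IA OA' IB OB' :=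
  W - rrOB' W + rrIB' (rrOB' W) - rrOA' (rrIB' (rrOB' W))

/-- The four nonsignaling-preservation (NSP) conditions. -/
def SatisfiesNSP (W : WTen IA' OA IB' OB IA OA' IB OB') : Prop :=
  rrOA (rrPrimes W) = rrIA (rrOA (rrPrimes W)) ∧
  rrOB (rrPrimes W) = rrIB (rrOB (rrPrimes W)) ∧
  rrOA (MA W) = rrIA (rrOA (MA W)) ∧
  rrOB (MB W) = rrIB (rrOB (MB W))

/-- A boxworld process. -/
def IsBoxworldProcess (W : WTen IA' OA IB' OB IA OA' IB OB') : Prop :=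
  Nonneg8 W ∧
  tot W = (Fintype.card IA : ℝ) * (Fintype.card OA' : ℝ) *
      (Fintype.card IB : ℝ) * (Fintype.card OB' : ℝ) ∧
  rrA W = rrOB' (rrA W) ∧
  rrB W = rrOA' (rrB W) ∧
  W = rrOA' W + rrOB' W - rrOA' (rrOB' W) ∧
  rrOA W = rrIA (rrOA W) ∧
  rrOB W = rrIB (rrOB W)

/-- The action `W * P` of a process tensor on a bipartite box
`P(o'_A, o'_B | i'_A, i'_B)`, contracting the indices `O'_A, O'_B, I'_A, I'_B`. -/
def actOnBox (W : WTen IA' OA IB' OB IA OA' IB OB')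
    (P : OA' → OB' → IA' → IB' → ℝ) : OA → OB → IA → IB → ℝ :=
  fun oa ob ia ib =>
    ∑ ia', ∑ ib', ∑ oa', ∑ ob', W ia' oa ib' ob ia oa' ib ob' * P oa' ob' ia' ib'

end WireDefs

section OpDefs

variable {I' O I O' : Type}
variable [Fintype I'] [Fintype O] [Fintype I] [Fintype O']

/-- Reduce-and-replace over the index `I'` of an operation tensor. -/
def rrOpI' (T : OpTen I' O I O') : OpTen I' O I O' :=
  fun _ o i o' => (∑ j, T j o i o') / (Fintype.card I' : ℝ)

/-- Reduce-and-replace over the index `O` of an operation tensor. -/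
def rrOpO (T : OpTen I' O I O') : OpTen I' O I O' :=
  fun i' _ i o' => (∑ j, T i' j i o') / (Fintype.card O : ℝ)

/-- Reduce-and-replace over the index `I` of an operation tensor. -/
def rrOpI (T : OpTen I' O I O') : OpTen I' O I O' :=
  fun i' o _ o' => (∑ j, T i' o j o') / (Fintype.card I : ℝ)

/-- Reduce-and-replace over the index `O'` of an operation tensor. -/
def rrOpO' (T : OpTen I' O I O') : OpTen I' O I O' :=
  fun i' o i _ => (∑ j, T i' o i j) / (Fintype.card O' : ℝ)

/-- Total reduction of an operation tensor. -/
def totOp (T : OpTen I' O I O') : ℝ := ∑ i', ∑ o, ∑ i, ∑ o', T i' o i o'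

/-- A deterministic local operation. -/
def IsDetOp (T : OpTen I' O I O') : Prop :=
  totOp T = (Fintype.card I' : ℝ) * (Fintype.card O : ℝ) ∧
  rrOpI (rrOpO' T) = rrOpI' (rrOpI (rrOpO (rrOpO' T))) ∧
  rrOpO' T = rrOpO (rrOpO' T)

/-- A set of probabilistic local operations `T^{a|x}(i, o' | i', o)`:
nonnegative tensors whose sum over the classical outcome `a` is, for each
classical input `x`, a deterministic local operation. -/
def IsLocalOps {A X : Type} [Fintype A] (T : A → X → OpTen I' O I O') : Prop :=
  (∀ a x i' o i o', 0 ≤ T a x i' o i o') ∧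
  ∀ x, IsDetOp (fun i' o i o' => ∑ a, T a x i' o i o')

/-- A nonsignaling set of probabilistic local operations: either the
deterministic operation `T^x` is independent of `x` (case 1), or it is a
convex combination of deterministic pre-processings `f_λ` (possibly depending
on `x`) and post-processings `g_λ` independent of both the box output and `x`
(case 2). -/
def IsNSLocalOps {A X : Type} [Fintype A] (T : A → X → OpTen I' O I O') : Prop :=
  IsLocalOps T ∧
  ((∀ x x' i' o i o', (∑ a, T a x i' o i o') = ∑ a, T a x' i' o i o') ∨
    ∃ (m : ℕ) (π : Fin m → ℝ) (f : Fin m → I' → X → I) (g : Fin m → I' → O'),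
      (∀ l, 0 ≤ π l) ∧ (∑ l, π l = 1) ∧
      ∀ x i' o i o', (∑ a, T a x i' o i o') =
        ∑ l, π l * ((if i = f l i' x then (1 : ℝ) else 0) *
          (if o' = g l i' then (1 : ℝ) else 0)))

end OpDefs

/-- A bipartite nonsignaling box `P(o_1, o_2 | i_1, i_2)`. -/
def IsNSBox {O1 O2 I1 I2 : Type} [Fintype O1] [Fintype O2]
    (P : O1 → O2 → I1 → I2 → ℝ) : Prop :=
  (∀ o1 o2 i1 i2, 0 ≤ P o1 o2 i1 i2) ∧
  (∀ i1 i2, ∑ o1, ∑ o2, P o1 o2 i1 i2 = 1) ∧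
  (∀ o1 i1 i2 i2', ∑ o2, P o1 o2 i1 i2 = ∑ o2, P o1 o2 i1 i2') ∧
  (∀ o2 i1 i1' i2, ∑ o1, P o1 o2 i1 i2 = ∑ o1, P o1 o2 i1' i2)

section Corr

variable {IA' OA IB' OB IA OA' IB OB' : Type}
variable [Fintype IA'] [Fintype OA] [Fintype IB'] [Fintype OB]
variable [Fintype IA] [Fintype OA'] [Fintype IB] [Fintype OB']
variable {A X B Y : Type}

/-- The correlations `(T^{A|X} ⊗ T^{B|Y}) * W` generated by local operations
acting on a process tensor: contraction over all eight wire indices. -/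
def corr (TA : A → X → OpTen IA' OA IA OA') (TB : B → Y → OpTen IB' OB IB OB')
    (W : WTen IA' OA IB' OB IA OA' IB OB') (a : A) (b : B) (x : X) (y : Y) : ℝ :=
  ∑ ia', ∑ oa, ∑ ib', ∑ ob, ∑ ia, ∑ oa', ∑ ib, ∑ ob',
    TA a x ia' oa ia oa' * TB b y ib' ob ib ob' * W ia' oa ib' ob ia oa' ib ob'

end Corr

section Aux

set_option linter.unusedSectionVars false

lemma swap4 {α β γ δ : Type} [Fintype α] [Fintype β] [Fintype γ] [Fintype δ]
    (f : α → β → γ → δ → ℝ) :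
    ∑ a, ∑ b, ∑ c, ∑ d, f a b c d = ∑ c, ∑ d, ∑ a, ∑ b, f a b c d := by
  have h1 : ∑ a, ∑ b, ∑ c, ∑ d, f a b c d
      = ∑ p : α × β, ∑ q : γ × δ, f p.1 p.2 q.1 q.2 := by
    simp only [Fintype.sum_prod_type]
  have h2 : ∑ c, ∑ d, ∑ a, ∑ b, f a b c d
      = ∑ q : γ × δ, ∑ p : α × β, f p.1 p.2 q.1 q.2 := by
    simp only [Fintype.sum_prod_type]
  rw [h1, h2, Finset.sum_comm]

lemma swap44 {α β γ δ α' β' γ' δ' : Type}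
    [Fintype α] [Fintype β] [Fintype γ] [Fintype δ]
    [Fintype α'] [Fintype β'] [Fintype γ'] [Fintype δ']
    (f : α → β → γ → δ → α' → β' → γ' → δ' → ℝ) :
    ∑ a, ∑ b, ∑ c, ∑ d, ∑ a', ∑ b', ∑ c', ∑ d', f a b c d a' b' c' d'
      = ∑ a', ∑ b', ∑ c', ∑ d', ∑ a, ∑ b, ∑ c, ∑ d, f a b c d a' b' c' d' := by
  have h1 : ∑ a, ∑ b, ∑ c, ∑ d, ∑ a', ∑ b', ∑ c', ∑ d', f a b c d a' b' c' d'
      = ∑ p : α × β × γ × δ, ∑ q : α' × β' × γ' × δ',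
          f p.1 p.2.1 p.2.2.1 p.2.2.2 q.1 q.2.1 q.2.2.1 q.2.2.2 := by
    simp only [Fintype.sum_prod_type]
  have h2 : ∑ a', ∑ b', ∑ c', ∑ d', ∑ a, ∑ b, ∑ c, ∑ d, f a b c d a' b' c' d'
      = ∑ q : α' × β' × γ' × δ', ∑ p : α × β × γ × δ,
          f p.1 p.2.1 p.2.2.1 p.2.2.2 q.1 q.2.1 q.2.2.1 q.2.2.2 := by
    simp only [Fintype.sum_prod_type]
  rw [h1, h2, Finset.sum_comm]

end Aux
section Aux2

set_option linter.unusedSectionVars false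

variable {IA' OA IB' OB IA OA' IB OB' : Type}
variable [Fintype IA'] [Fintype OA] [Fintype IB'] [Fintype OB]
variable [Fintype IA] [Fintype OA'] [Fintype IB] [Fintype OB']
variable {A X B Y : Type} [Fintype A] [Fintype B]

lemma corr_group (TA : A → X → OpTen IA' OA IA OA') (TB : B → Y → OpTen IB' OB IB OB')
    (W : WTen IA' OA IB' OB IA OA' IB OB') (a : A) (b : B) (x : X) (y : Y) :
    corr TA TB W a b x y =
      ∑ ia', ∑ oa, ∑ ia, ∑ oa', TA a x ia' oa ia oa' *
        (∑ ib', ∑ ob, ∑ ib, ∑ ob', TB b y ib' ob ib ob' * W ia' oa ib' ob ia oa' ib ob') := by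
  unfold corr
  refine Finset.sum_congr rfl fun ia' _ => Finset.sum_congr rfl fun oa _ => ?_
  rw [swap4 (f := fun ib' ob ia oa' => ∑ ib, ∑ ob',
    TA a x ia' oa ia oa' * TB b y ib' ob ib ob' * W ia' oa ib' ob ia oa' ib ob')]
  simp only [Finset.mul_sum, mul_assoc]

lemma corr_group' (TA : A → X → OpTen IA' OA IA OA') (TB : B → Y → OpTen IB' OB IB OB')
    (W : WTen IA' OA IB' OB IA OA' IB OB') (a : A) (b : B) (x : X) (y : Y) :
    corr TA TB W a b x y =
      ∑ ib', ∑ ob, ∑ ib, ∑ ob', TB b y ib' ob ib ob' *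
        (∑ ia', ∑ oa, ∑ ia, ∑ oa', TA a x ia' oa ia oa' * W ia' oa ib' ob ia oa' ib ob') := by
  rw [corr_group]
  simp only [Finset.mul_sum]
  rw [swap44 (f := fun ia' oa ia oa' ib' ob ib ob' =>
    TA a x ia' oa ia oa' * (TB b y ib' ob ib ob' * W ia' oa ib' ob ia oa' ib ob'))]
  refine Finset.sum_congr rfl fun _ _ => Finset.sum_congr rfl fun _ _ =>
    Finset.sum_congr rfl fun _ _ => Finset.sum_congr rfl fun _ _ =>
    Finset.sum_congr rfl fun _ _ => Finset.sum_congr rfl fun _ _ =>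
    Finset.sum_congr rfl fun _ _ => Finset.sum_congr rfl fun _ _ => ?_
  ring

lemma sum_b_corr (TA : A → X → OpTen IA' OA IA OA') (TB : B → Y → OpTen IB' OB IB OB')
    (W : WTen IA' OA IB' OB IA OA' IB OB') (a : A) (x : X) (y : Y) :
    ∑ b, corr TA TB W a b x y =
      ∑ ia', ∑ oa, ∑ ia, ∑ oa', TA a x ia' oa ia oa' *
        (∑ ib', ∑ ob, ∑ ib, ∑ ob',
          (∑ b, TB b y ib' ob ib ob') * W ia' oa ib' ob ia oa' ib ob') := by
  simp only [corr_group, Finset.sum_mul, Finset.mul_sum]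
  rw [Finset.sum_comm]
  refine Finset.sum_congr rfl fun ia' _ => ?_
  rw [Finset.sum_comm]
  refine Finset.sum_congr rfl fun oa _ => ?_
  rw [Finset.sum_comm]
  refine Finset.sum_congr rfl fun ia _ => ?_
  rw [Finset.sum_comm]
  refine Finset.sum_congr rfl fun oa' _ => ?_
  rw [Finset.sum_comm]
  refine Finset.sum_congr rfl fun ib' _ => ?_
  rw [Finset.sum_comm]
  refine Finset.sum_congr rfl fun ob _ => ?_
  rw [Finset.sum_comm]
  refine Finset.sum_congr rfl fun ib _ => ?_
  rw [Finset.sum_comm]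

lemma sum_a_corr (TA : A → X → OpTen IA' OA IA OA') (TB : B → Y → OpTen IB' OB IB OB')
    (W : WTen IA' OA IB' OB IA OA' IB OB') (b : B) (x : X) (y : Y) :
    ∑ a, corr TA TB W a b x y =
      ∑ ib', ∑ ob, ∑ ib, ∑ ob', TB b y ib' ob ib ob' *
        (∑ ia', ∑ oa, ∑ ia, ∑ oa',
          (∑ a, TA a x ia' oa ia oa') * W ia' oa ib' ob ia oa' ib ob') := by
  simp only [corr_group', Finset.sum_mul, Finset.mul_sum]
  rw [Finset.sum_comm]
  refine Finset.sum_congr rfl fun _ _ => ?_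
  rw [Finset.sum_comm]
  refine Finset.sum_congr rfl fun _ _ => ?_
  rw [Finset.sum_comm]
  refine Finset.sum_congr rfl fun _ _ => ?_
  rw [Finset.sum_comm]
  refine Finset.sum_congr rfl fun _ _ => ?_
  rw [Finset.sum_comm]
  refine Finset.sum_congr rfl fun _ _ => ?_
  rw [Finset.sum_comm]
  refine Finset.sum_congr rfl fun _ _ => ?_
  rw [Finset.sum_comm]
  refine Finset.sum_congr rfl fun _ _ => ?_
  rw [Finset.sum_comm]

end Aux2
section Aux3

set_option linter.unusedSectionVars false

variable {IA' OA IB' OB IA OA' IB OB' : Type}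
variable [Fintype IA'] [Fintype OA] [Fintype IB'] [Fintype OB]
variable [Fintype IA] [Fintype OA'] [Fintype IB] [Fintype OB']
variable [Nonempty IA'] [Nonempty OA] [Nonempty IB'] [Nonempty OB]
variable [Nonempty IA] [Nonempty OA'] [Nonempty IB] [Nonempty OB']

lemma condB_iff (W : WTen IA' OA IB' OB IA OA' IB OB') :
    rrOB W = rrIB (rrOB W) ↔
      ∀ ia' oa ib' ia oa' ob' ib1 ib2,
        ∑ ob, W ia' oa ib' ob ia oa' ib1 ob' = ∑ ob, W ia' oa ib' ob ia oa' ib2 ob' := by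
  have hOB : (Fintype.card OB : ℝ) ≠ 0 := by
    exact_mod_cast Fintype.card_ne_zero
  have hIB : (Fintype.card IB : ℝ) ≠ 0 := by
    exact_mod_cast Fintype.card_ne_zero
  constructor
  · intro h ia' oa ib' ia oa' ob' ib1 ib2
    have e1 := congrFun (congrFun (congrFun (congrFun (congrFun (congrFun (congrFun
      (congrFun h ia') oa) ib') (Classical.arbitrary OB)) ia) oa') ib1) ob'
    have e2 := congrFun (congrFun (congrFun (congrFun (congrFun (congrFun (congrFun
      (congrFun h ia') oa) ib') (Classical.arbitrary OB)) ia) oa') ib2) ob'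
    simp only [rrOB, rrIB] at e1 e2
    have h3 := e1.trans e2.symm
    field_simp at h3
    exact h3
  · intro h
    funext ia' oa ib' ob ia oa' ib ob'
    simp only [rrOB, rrIB]
    rw [← Finset.sum_div]
    rw [Finset.sum_congr rfl fun k _ => h ia' oa ib' ia oa' ob' k ib]
    rw [Finset.sum_const, Finset.card_univ, nsmul_eq_mul]
    field_simp

lemma condA_iff (W : WTen IA' OA IB' OB IA OA' IB OB') :
    rrOA W = rrIA (rrOA W) ↔
      ∀ ia' ib' ob oa' ib ob' ia1 ia2,
        ∑ oa, W ia' oa ib' ob ia1 oa' ib ob' = ∑ oa, W ia' oa ib' ob ia2 oa' ib ob' := by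
  have hOA : (Fintype.card OA : ℝ) ≠ 0 := by
    exact_mod_cast Fintype.card_ne_zero
  have hIA : (Fintype.card IA : ℝ) ≠ 0 := by
    exact_mod_cast Fintype.card_ne_zero
  constructor
  · intro h ia' ib' ob oa' ib ob' ia1 ia2
    have e1 := congrFun (congrFun (congrFun (congrFun (congrFun (congrFun (congrFun
      (congrFun h ia') (Classical.arbitrary OA)) ib') ob) ia1) oa') ib) ob'
    have e2 := congrFun (congrFun (congrFun (congrFun (congrFun (congrFun (congrFun
      (congrFun h ia') (Classical.arbitrary OA)) ib') ob) ia2) oa') ib) ob'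
    simp only [rrOA, rrIA] at e1 e2
    have h3 := e1.trans e2.symm
    field_simp at h3
    exact h3
  · intro h
    funext ia' oa ib' ob ia oa' ib ob'
    simp only [rrOA, rrIA]
    rw [← Finset.sum_div]
    rw [Finset.sum_congr rfl fun k _ => h ia' ib' ob oa' ib ob' k ia]
    rw [Finset.sum_const, Finset.card_univ, nsmul_eq_mul]
    field_simp

end Aux3
section Aux4

set_option linter.unusedSectionVars false

variable {IA' OA IB' OB IA OA' IB OB' : Type}
variable [Fintype IA'] [Fintype OA] [Fintype IB'] [Fintype OB]
variable [Fintype IA] [Fintype OA'] [Fintype IB] [Fintype OB']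

lemma backward_B (W : WTen IA' OA IB' OB IA OA' IB OB')
    (hc : ∀ ia' oa ib' ia oa' ob' ib1 ib2,
      ∑ ob, W ia' oa ib' ob ia oa' ib1 ob' = ∑ ob, W ia' oa ib' ob ia oa' ib2 ob')
    {A X B Y : Type} [Fintype A] [Fintype B]
    (TA : A → X → OpTen IA' OA IA OA') (TB : B → Y → OpTen IB' OB IB OB')
    (hNS : IsNSLocalOps TB) (a : A) (x : X) (y y' : Y) :
    ∑ b, corr TA TB W a b x y = ∑ b, corr TA TB W a b x y' := by
  rcases hNS.2 with h | ⟨m, π, f, g, hπ0, hπ1, hT⟩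
  · simp only [sum_b_corr, h y y']
  · simp only [sum_b_corr, hT]
    refine Finset.sum_congr rfl fun ia' _ => Finset.sum_congr rfl fun oa _ =>
      Finset.sum_congr rfl fun ia _ => Finset.sum_congr rfl fun oa' _ => ?_
    congr 1
    have key : ∀ (z : Y),
        (∑ ib', ∑ ob, ∑ ib, ∑ ob',
          (∑ l, π l * ((if ib = f l ib' z then (1:ℝ) else 0) *
            (if ob' = g l ib' then (1:ℝ) else 0))) * W ia' oa ib' ob ia oa' ib ob')
        = ∑ ib', ∑ l, π l * ∑ ob, W ia' oa ib' ob ia oa' (f l ib' z) (g l ib') := by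
      intro z
      refine Finset.sum_congr rfl fun ib' _ => ?_
      have step : ∀ ob, (∑ ib, ∑ ob',
          (∑ l, π l * ((if ib = f l ib' z then (1:ℝ) else 0) *
            (if ob' = g l ib' then (1:ℝ) else 0))) * W ia' oa ib' ob ia oa' ib ob')
          = ∑ l, π l * W ia' oa ib' ob ia oa' (f l ib' z) (g l ib') := by
        intro ob
        simp only [Finset.sum_mul]
        refine (Finset.sum_congr rfl fun ib _ => Finset.sum_comm).trans ?_
        rw [Finset.sum_comm]
        refine Finset.sum_congr rfl fun l _ => ?_
        simp [mul_ite, ite_mul, zero_mul, mul_zero, one_mul, mul_one,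
          Finset.sum_ite_eq', Finset.mul_sum]
      rw [Finset.sum_congr rfl fun ob _ => step ob]
      rw [Finset.sum_comm]
      refine Finset.sum_congr rfl fun l _ => ?_
      rw [← Finset.mul_sum]
    rw [key y, key y']
    refine Finset.sum_congr rfl fun ib' _ => Finset.sum_congr rfl fun l _ => ?_
    rw [hc ia' oa ib' ia oa' (g l ib') (f l ib' y) (f l ib' y')]

lemma backward_A (W : WTen IA' OA IB' OB IA OA' IB OB')
    (hc : ∀ ia' ib' ob oa' ib ob' ia1 ia2,
      ∑ oa, W ia' oa ib' ob ia1 oa' ib ob' = ∑ oa, W ia' oa ib' ob ia2 oa' ib ob')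
    {A X B Y : Type} [Fintype A] [Fintype B]
    (TA : A → X → OpTen IA' OA IA OA') (TB : B → Y → OpTen IB' OB IB OB')
    (hNS : IsNSLocalOps TA) (b : B) (x x' : X) (y : Y) :
    ∑ a, corr TA TB W a b x y = ∑ a, corr TA TB W a b x' y := by
  rcases hNS.2 with h | ⟨m, π, f, g, hπ0, hπ1, hT⟩
  · simp only [sum_a_corr, h x x']
  · simp only [sum_a_corr, hT]
    refine Finset.sum_congr rfl fun ib' _ => Finset.sum_congr rfl fun ob _ =>
      Finset.sum_congr rfl fun ib _ => Finset.sum_congr rfl fun ob' _ => ?_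
    congr 1
    have key : ∀ (z : X),
        (∑ ia', ∑ oa, ∑ ia, ∑ oa',
          (∑ l, π l * ((if ia = f l ia' z then (1:ℝ) else 0) *
            (if oa' = g l ia' then (1:ℝ) else 0))) * W ia' oa ib' ob ia oa' ib ob')
        = ∑ ia', ∑ l, π l * ∑ oa, W ia' oa ib' ob (f l ia' z) (g l ia') ib ob' := by
      intro z
      refine Finset.sum_congr rfl fun ia' _ => ?_
      have step : ∀ oa, (∑ ia, ∑ oa',
          (∑ l, π l * ((if ia = f l ia' z then (1:ℝ) else 0) *
            (if oa' = g l ia' then (1:ℝ) else 0))) * W ia' oa ib' ob ia oa' ib ob')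
          = ∑ l, π l * W ia' oa ib' ob (f l ia' z) (g l ia') ib ob' := by
        intro oa
        simp only [Finset.sum_mul]
        refine (Finset.sum_congr rfl fun ia _ => Finset.sum_comm).trans ?_
        rw [Finset.sum_comm]
        refine Finset.sum_congr rfl fun l _ => ?_
        simp [mul_ite, ite_mul, zero_mul, mul_zero, one_mul, mul_one,
          Finset.sum_ite_eq', Finset.mul_sum]
      rw [Finset.sum_congr rfl fun oa _ => step oa]
      rw [Finset.sum_comm]
      refine Finset.sum_congr rfl fun l _ => ?_
      rw [← Finset.mul_sum]
    rw [key x, key x']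
    refine Finset.sum_congr rfl fun ia' _ => Finset.sum_congr rfl fun l _ => ?_
    rw [hc ia' ib' ob (g l ia') ib ob' (f l ia' x) (f l ia' x')]

end Aux4
section Aux5

set_option linter.unusedSectionVars false

variable {I' O I O' X : Type}
variable [Fintype I'] [Fintype O] [Fintype I] [Fintype O']

/-- Measurement operation: record `(i', o)` as outcome, feed `i = F i' x`, `o' = G i'`. -/
def measOp (F : I' → X → I) (G : I' → O') : (I' × O) → X → OpTen I' O I O' :=
  fun a x i' o i o' =>
    (if i' = a.1 then (1:ℝ) else 0) * ((if o = a.2 then (1:ℝ) else 0) *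
      ((if i = F i' x then (1:ℝ) else 0) * (if o' = G i' then (1:ℝ) else 0)))

lemma measOp_sum (F : I' → X → I) (G : I' → O') (x : X) (i' : I') (o : O) (i : I) (o' : O') :
    ∑ a : I' × O, measOp F G a x i' o i o'
      = (if i = F i' x then (1:ℝ) else 0) * (if o' = G i' then (1:ℝ) else 0) := by
  simp [measOp, Fintype.sum_prod_type, Finset.sum_ite_eq, ite_mul, one_mul, zero_mul]

lemma ite01_nonneg (P : Prop) [Decidable P] : (0:ℝ) ≤ if P then 1 else 0 := by
  split <;> norm_num

lemma measOp_NS [Nonempty I'] [Nonempty O] [Nonempty I] [Nonempty O']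
    (F : I' → X → I) (G : I' → O') : IsNSLocalOps (measOp (O := O) F G) := by
  have hI : (Fintype.card I : ℝ) ≠ 0 := by exact_mod_cast Fintype.card_ne_zero
  have hI' : (Fintype.card I' : ℝ) ≠ 0 := by exact_mod_cast Fintype.card_ne_zero
  have hO : (Fintype.card O : ℝ) ≠ 0 := by exact_mod_cast Fintype.card_ne_zero
  have hO' : (Fintype.card O' : ℝ) ≠ 0 := by exact_mod_cast Fintype.card_ne_zero
  refine ⟨⟨fun a x i' o i o' => ?_, fun x => ?_⟩, ?_⟩
  · exact mul_nonneg (ite01_nonneg _) (mul_nonneg (ite01_nonneg _)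
      (mul_nonneg (ite01_nonneg _) (ite01_nonneg _)))
  · refine ⟨?_, ?_, ?_⟩
    · simp only [totOp, measOp_sum]
      simp [Finset.sum_ite_eq', mul_comm]
    · funext i' o i o'
      simp only [rrOpI, rrOpO', rrOpI', rrOpO, measOp_sum]
      simp only [← Finset.sum_div]
      simp [Finset.sum_ite_eq', Finset.sum_const, Finset.card_univ]
      field_simp
    · funext i' o i o'
      simp only [rrOpO', rrOpO, measOp_sum]
      simp only [← Finset.sum_div]
      simp [Finset.sum_ite_eq', Finset.sum_const, Finset.card_univ]
      field_simp
      ring_nf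
      simp [ite_mul]
  · refine Or.inr ⟨1, fun _ => 1, fun _ i' x => F i' x, fun _ i' => G i',
      fun _ => zero_le_one, by simp, fun x i' o i o' => ?_⟩
    simp [measOp_sum]

end Aux5
section Aux6

set_option linter.unusedSectionVars false

lemma sum_cancel {α : Type} [Fintype α] (f g : α → ℝ) (a₀ : α)
    (hfg : ∀ j, j ≠ a₀ → f j = g j) (h : ∑ j, f j = ∑ j, g j) : f a₀ = g a₀ := by
  classical
  have hf : ∑ j, f j = f a₀ + ∑ j ∈ Finset.univ.erase a₀, f j :=
    (Finset.add_sum_erase _ f (Finset.mem_univ a₀)).symm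
  have hg : ∑ j, g j = g a₀ + ∑ j ∈ Finset.univ.erase a₀, g j :=
    (Finset.add_sum_erase _ g (Finset.mem_univ a₀)).symm
  have he : ∑ j ∈ Finset.univ.erase a₀, f j = ∑ j ∈ Finset.univ.erase a₀, g j :=
    Finset.sum_congr rfl fun j hj => hfg j (Finset.ne_of_mem_erase hj)
  rw [hf, hg, he] at h
  linarith

variable {IA' OA IB' OB IA OA' IB OB' : Type}
variable [Fintype IA'] [Fintype OA] [Fintype IB'] [Fintype OB]
variable [Fintype IA] [Fintype OA'] [Fintype IB] [Fintype OB']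

lemma corr_meas {X Y : Type}
    (FA : IA' → X → IA) (GA : IA' → OA') (FB : IB' → Y → IB) (GB : IB' → OB')
    (W : WTen IA' OA IB' OB IA OA' IB OB') (a : IA' × OA) (b : IB' × OB) (x : X) (y : Y) :
    corr (measOp FA GA) (measOp FB GB) W a b x y
      = W a.1 a.2 b.1 b.2 (FA a.1 x) (GA a.1) (FB b.1 y) (GB b.1) := by
  unfold corr measOp
  simp [ite_mul, mul_ite, one_mul, zero_mul, mul_zero, mul_one,
    Finset.sum_ite_eq, Finset.sum_ite_eq', Finset.mem_univ]

end Aux6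
theorem statement_6
    {IA' OA IB' OB IA OA' IB OB' : Type}
    [Fintype IA'] [Fintype OA] [Fintype IB'] [Fintype OB]
    [Fintype IA] [Fintype OA'] [Fintype IB] [Fintype OB']
    [Nonempty IA'] [Nonempty OA] [Nonempty IB'] [Nonempty OB]
    [Nonempty IA] [Nonempty OA'] [Nonempty IB] [Nonempty OB']
    (W : WTen IA' OA IB' OB IA OA' IB OB') (hW : IsProcessTensor W) :
    (∀ (X A Y B : Type) [Fintype X] [Nonempty X] [Fintype A] [Nonempty A]
        [Fintype Y] [Nonempty Y] [Fintype B] [Nonempty B]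
        (TA : A → X → OpTen IA' OA IA OA') (TB : B → Y → OpTen IB' OB IB OB'),
        IsNSLocalOps TA → IsNSLocalOps TB →
        ((∀ a x y y', ∑ b, corr TA TB W a b x y = ∑ b, corr TA TB W a b x y') ∧
          (∀ b x x' y, ∑ a, corr TA TB W a b x y = ∑ a, corr TA TB W a b x' y))) ↔
      (rrOA W = rrIA (rrOA W) ∧ rrOB W = rrIB (rrOB W)) := by
  constructor
  · intro h
    constructor
    · rw [condA_iff]
      intro ia'0 ib'0 ob0 oa'0 ib0 ob'0 ia1 ia2
      have h2 := (h Bool (IA' × OA) Bool (IB' × OB)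
        (measOp (O := OA) (fun i (x : Bool) => if i = ia'0 then (if x then ia1 else ia2) else ia1)
          (fun _ => oa'0))
        (measOp (O := OB) (fun (_ : IB') (_ : Bool) => ib0) (fun _ => ob'0))
        (measOp_NS _ _) (measOp_NS _ _)).2
      have E := h2 (ib'0, ob0) true false true
      simp only [corr_meas, Fintype.sum_prod_type] at E
      simp only [if_true, ite_self, Bool.false_eq_true, if_false] at E
      have key := sum_cancel
        (f := fun i => ∑ o, W i o ib'0 ob0 ia1 oa'0 ib0 ob'0)
        (g := fun i => ∑ o, W i o ib'0 ob0 (if i = ia'0 then ia2 else ia1) oa'0 ib0 ob'0)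
        ia'0 (fun j hj => by simp [hj]) E
      simpa using key
    · rw [condB_iff]
      intro ia'0 oa0 ib'0 ia0 oa'0 ob'0 ib1 ib2
      have h1 := (h Bool (IA' × OA) Bool (IB' × OB)
        (measOp (O := OA) (fun (_ : IA') (_ : Bool) => ia0) (fun _ => oa'0))
        (measOp (O := OB) (fun j (y : Bool) => if j = ib'0 then (if y then ib1 else ib2) else ib1)
          (fun _ => ob'0))
        (measOp_NS _ _) (measOp_NS _ _)).1
      have E := h1 (ia'0, oa0) true true false
      simp only [corr_meas, Fintype.sum_prod_type] at E
      simp only [if_true, ite_self, Bool.false_eq_true, if_false] at E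
      have key := sum_cancel
        (f := fun j => ∑ p, W ia'0 oa0 j p ia0 oa'0 ib1 ob'0)
        (g := fun j => ∑ p, W ia'0 oa0 j p ia0 oa'0 (if j = ib'0 then ib2 else ib1) ob'0)
        ib'0 (fun j hj => by simp [hj]) E
      simpa using key
  · rintro ⟨hA, hB⟩
    intro X A Y B _ _ _ _ _ _ _ _ TA TB hTA hTB
    refine ⟨fun a x y y' => ?_, fun b x x' y => ?_⟩
    · exact backward_B W ((condB_iff W).mp hB) TA TB hTB a x y y'
    · exact backward_A W ((condA_iff W).mp hA) TA TB hTA b x x' y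

end Boxworld

end
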